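/- For fixed r ≥ 2, fixed α_1,…,α_r > 0 with ᾱ = Σ_i α_i, and sequences of counts n_i(n) with Σ_i n_i(n) = n and n_i(n)/n → p_i > 0 for each i, the quantity log Γ(ᾱ) − log Γ(n + ᾱ) + Σ_i [log Γ(n_i(n) + α_i) − log Γ(α_i)] equals Σ_i n_i(n) log(n_i(n)/n) − ((r−1)/2) log n + O(1) as n → ∞. -/

import Mathlib

open Finset Filter Asymptotics

lemma stirling_O1 : (fun n : ℕ => Real.log n.factorial -
    ((n:ℝ) * Real.log n - n + 1/2 * Real.log n)) =O[atTop] (fun _ => (1:ℝ)) := by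
  have h1 : Tendsto (fun n : ℕ => Real.log (Stirling.stirlingSeq n)) atTop
      (nhds (Real.log (Real.sqrt Real.pi))) :=
    ((Real.continuousAt_log (by positivity)).tendsto).comp Stirling.tendsto_stirlingSeq_sqrt_pi
  have h2 : Tendsto (fun n : ℕ => Real.log (Stirling.stirlingSeq n) + 1/2 * Real.log 2) atTop
      (nhds (Real.log (Real.sqrt Real.pi) + 1/2 * Real.log 2)) := h1.add_const _
  refine (h2.isBigO_one ℝ).congr' ?_ (EventuallyEq.refl _ _)
  filter_upwards [eventually_ge_atTop 1] with n hn
  have hn0 : (0:ℝ) < n := by exact_mod_cast hn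
  rw [Stirling.log_stirlingSeq_formula, Real.log_mul (by norm_num) hn0.ne',
    Real.log_div hn0.ne' (Real.exp_ne_zero 1), Real.log_exp]
  ring


lemma logGamma_add_one {x : ℝ} (hx : 0 < x) :
    Real.log (Real.Gamma (x + 1)) = Real.log (Real.Gamma x) + Real.log x := by
  rw [Real.Gamma_add_one hx.ne', Real.log_mul hx.ne' (Real.Gamma_pos_of_pos hx).ne', add_comm]

lemma logGamma_upper {x a : ℝ} (hx : 1 < x) (ha : 0 ≤ a) (ha1 : a ≤ 1) :
    Real.log (Real.Gamma (x + a)) ≤ Real.log (Real.Gamma x) + a * Real.log x := by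
  have hx0 : (0:ℝ) < x := by linarith
  have := Real.convexOn_log_Gamma.2 (Set.mem_Ioi.mpr hx0)
    (Set.mem_Ioi.mpr (by linarith : (0:ℝ) < x + 1)) (by linarith : 0 ≤ 1 - a) ha (by ring)
  simp only [smul_eq_mul, Function.comp_apply] at this
  have harg : (1 - a) * x + a * (x + 1) = x + a := by ring
  rw [harg] at this
  calc Real.log (Real.Gamma (x + a)) ≤ (1-a) * Real.log (Real.Gamma x)
        + a * Real.log (Real.Gamma (x+1)) := this
    _ = Real.log (Real.Gamma x) + a * Real.log x := by
        rw [logGamma_add_one hx0]; ring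

lemma logGamma_lower {x a : ℝ} (hx : 2 ≤ x) (ha : 0 ≤ a) :
    Real.log (Real.Gamma x) + a * Real.log (x - 1) ≤ Real.log (Real.Gamma (x + a)) := by
  have hx1 : (0:ℝ) < x - 1 := by linarith
  have h1a : (0:ℝ) < 1 + a := by linarith
  have := Real.convexOn_log_Gamma.2 (Set.mem_Ioi.mpr hx1)
    (Set.mem_Ioi.mpr (by linarith : (0:ℝ) < x + a))
    (by positivity : (0:ℝ) ≤ a / (1+a)) (by positivity : (0:ℝ) ≤ 1 / (1+a))
    (by field_simp; ring)
  simp only [smul_eq_mul, Function.comp_apply] at this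
  have harg : a / (1+a) * (x - 1) + 1 / (1+a) * (x + a) = x := by field_simp; ring
  rw [harg] at this
  -- log Γ x ≤ (a/(1+a)) logΓ(x-1) + (1/(1+a)) logΓ(x+a)
  have hG : Real.log (Real.Gamma x) = Real.log (Real.Gamma (x-1)) + Real.log (x-1) := by
    have := logGamma_add_one hx1
    rw [sub_add_cancel] at this
    exact this
  have e1 : (1+a) * (a / (1+a) * Real.log (Real.Gamma (x-1)) + 1/(1+a) * Real.log (Real.Gamma (x+a)))
      = a * Real.log (Real.Gamma (x-1)) + Real.log (Real.Gamma (x+a)) := by field_simp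
  have h2 := mul_le_mul_of_nonneg_left this h1a.le
  rw [e1] at h2
  nlinarith [h2, hG]

lemma logGamma_add_nat {x : ℝ} (hx : 0 < x) (m : ℕ) :
    Real.log (Real.Gamma (x + m)) =
      Real.log (Real.Gamma x) + ∑ j ∈ Finset.range m, Real.log (x + j) := by
  induction m with
  | zero => simp
  | succ k ih =>
      have hxk : 0 < x + k := by positivity
      have : x + (k+1 : ℕ) = (x + k) + 1 := by push_cast; ring
      rw [this, logGamma_add_one hxk, ih, Finset.sum_range_succ]
      ring

lemma key_asymp {α : ℝ} (hα : 0 < α) :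
    (fun n : ℕ => Real.log (Real.Gamma ((n:ℝ) + α)) -
      ((n:ℝ) * Real.log n - n + (α - 1/2) * Real.log n)) =O[atTop] (fun _ => (1:ℝ)) := by
  set m := ⌊α⌋₊ with hm
  set a := α - m with hadef
  have ha0 : 0 ≤ a := sub_nonneg.2 (Nat.floor_le hα.le)
  have ha1 : a ≤ 1 := by
    have := Nat.lt_floor_add_one α
    simp only [hadef]; linarith
  have hma : (m:ℝ) + a = α := by simp [hadef]
  -- the bounded part
  have hg : ∀ n : ℕ, 2 ≤ n →
      |Real.log (Real.Gamma ((n:ℝ) + α)) -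
        (Real.log n.factorial - Real.log n + α * Real.log n)| ≤
      Real.log 2 + m * Real.log (m+1) + Real.log (m+1) := by
    intro n hn
    have hn1 : (1:ℝ) ≤ n := by exact_mod_cast Nat.one_le_of_lt hn
    have hn0 : (0:ℝ) < n := by linarith
    have hn2 : (2:ℝ) ≤ n := by exact_mod_cast hn
    set x : ℝ := (n:ℝ) + m with hxdef
    have hx2 : (2:ℝ) ≤ x := by
      have : (0:ℝ) ≤ m := Nat.cast_nonneg m
      simp only [hxdef]; linarith
    have hx1 : (1:ℝ) < x := by linarith
    have hx0 : (0:ℝ) < x := by linarith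
    have hxa : (n:ℝ) + α = x + a := by simp only [hxdef]; linarith [hma]
    -- T1 bound
    have hup := logGamma_upper hx1 ha0 ha1
    have hlo := logGamma_lower hx2 ha0
    have hlogx : Real.log x - Real.log (x-1) ≤ Real.log 2 := by
      rw [← Real.log_div hx0.ne' (by linarith : x - 1 ≠ 0)]
      have : x / (x-1) ≤ 2 := by
        rw [div_le_iff₀ (by linarith)]; linarith
      exact Real.log_le_log (by apply div_pos <;> linarith) this
    have hlogx0 : 0 ≤ Real.log x - Real.log (x - 1) :=
      sub_nonneg.2 (Real.log_le_log (by linarith) (by linarith))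
    have hT1 : |Real.log (Real.Gamma (x + a)) - Real.log (Real.Gamma x) - a * Real.log x|
        ≤ Real.log 2 := by
      rw [abs_le]
      constructor
      · nlinarith
      · linarith
    -- T2 bound
    have hterm : ∀ j ∈ Finset.range m,
        Real.log ((n:ℝ) + j) - Real.log n ∈ Set.Icc (0:ℝ) (Real.log (m+1)) := by
      intro j hj
      have hj' : (j:ℝ) ≤ m := by exact_mod_cast Nat.le_of_lt (Finset.mem_range.mp hj)
      constructor
      · exact sub_nonneg.2 (Real.log_le_log hn0 (le_add_of_nonneg_right (Nat.cast_nonneg j)))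
      · have h1 : (n:ℝ) + j ≤ n * (m+1) := by nlinarith [(Nat.cast_nonneg j : (0:ℝ) ≤ j)]
        have h2 : Real.log ((n:ℝ)+j) ≤ Real.log (n * (m+1)) :=
          Real.log_le_log (by positivity) h1
        rw [Real.log_mul hn0.ne' (by positivity)] at h2
        linarith
    have hT2 : |(∑ j ∈ Finset.range m, Real.log ((n:ℝ) + j)) - m * Real.log n|
        ≤ m * Real.log (m+1) := by
      have hsum : (∑ j ∈ Finset.range m, Real.log ((n:ℝ) + j)) - m * Real.log n
          = ∑ j ∈ Finset.range m, (Real.log ((n:ℝ) + j) - Real.log n) := by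
        rw [Finset.sum_sub_distrib, Finset.sum_const, Finset.card_range, nsmul_eq_mul]
      rw [hsum, abs_le]
      constructor
      · have : (0:ℝ) ≤ ∑ j ∈ Finset.range m, (Real.log ((n:ℝ) + j) - Real.log n) :=
          Finset.sum_nonneg fun j hj => (hterm j hj).1
        have hlm : (0:ℝ) ≤ Real.log (m+1) := Real.log_nonneg (le_add_of_nonneg_left (Nat.cast_nonneg m))
        nlinarith [(Nat.cast_nonneg m : (0:ℝ) ≤ m)]
      · calc ∑ j ∈ Finset.range m, (Real.log ((n:ℝ) + j) - Real.log n)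
            ≤ ∑ _j ∈ Finset.range m, Real.log (m+1) :=
              Finset.sum_le_sum fun j hj => (hterm j hj).2
          _ = m * Real.log (m+1) := by rw [Finset.sum_const, Finset.card_range]; ring
    -- T3 bound
    have hT3 : |a * (Real.log x - Real.log n)| ≤ Real.log (m+1) := by
      have h1 : x ≤ n * (m+1) := by simp only [hxdef]; nlinarith [(Nat.cast_nonneg m : (0:ℝ) ≤ m)]
      have h2 : Real.log x ≤ Real.log n + Real.log (m+1) := by
        have := Real.log_le_log hx0 h1
        rwa [Real.log_mul hn0.ne' (by positivity)] at this
      have h3 : Real.log n ≤ Real.log x := Real.log_le_log hn0 (by simp only [hxdef]; exact le_add_of_nonneg_right (Nat.cast_nonneg m))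
      rw [abs_mul, abs_of_nonneg ha0, abs_of_nonneg (by linarith)]
      have hlm : (0:ℝ) ≤ Real.log (m+1) := Real.log_nonneg (le_add_of_nonneg_left (Nat.cast_nonneg m))
      nlinarith
    -- assemble
    have h2eq : Real.log (Real.Gamma x) =
        Real.log (Real.Gamma (n:ℝ)) + ∑ j ∈ Finset.range m, Real.log ((n:ℝ) + j) :=
      logGamma_add_nat hn0 m
    have h5 : Real.log n.factorial = Real.log (Real.Gamma (n:ℝ)) + Real.log n := by
      rw [← Real.Gamma_nat_eq_factorial n, logGamma_add_one hn0]
    have hdecomp : Real.log (Real.Gamma ((n:ℝ) + α)) -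
        (Real.log n.factorial - Real.log n + α * Real.log n)
        = (Real.log (Real.Gamma (x + a)) - Real.log (Real.Gamma x) - a * Real.log x)
          + ((∑ j ∈ Finset.range m, Real.log ((n:ℝ) + j)) - m * Real.log n)
          + (a * (Real.log x - Real.log n)) := by
      rw [hxa, h2eq, h5, ← hma]; ring
    rw [hdecomp]
    calc |_| ≤ |Real.log (Real.Gamma (x + a)) - Real.log (Real.Gamma x) - a * Real.log x|
          + |(∑ j ∈ Finset.range m, Real.log ((n:ℝ) + j)) - m * Real.log n|
          + |a * (Real.log x - Real.log n)| := abs_add_three _ _ _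
      _ ≤ _ := add_le_add (add_le_add hT1 hT2) hT3
  -- combine with Stirling
  have hgO : (fun n : ℕ => Real.log (Real.Gamma ((n:ℝ) + α)) -
      (Real.log n.factorial - Real.log n + α * Real.log n)) =O[atTop] (fun _ => (1:ℝ)) := by
    rw [isBigO_iff]
    refine ⟨Real.log 2 + m * Real.log (m+1) + Real.log (m+1), ?_⟩
    filter_upwards [eventually_ge_atTop 2] with n hn
    simpa using hg n hn
  have := hgO.add stirling_O1
  refine this.congr' ?_ (by simp)
  filter_upwards with n
  ring


theorem mpl_score_asymptotics (r : ℕ) (hr : 2 ≤ r)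
    (α : Fin r → ℝ) (hα : ∀ i, 0 < α i)
    (nc : ℕ → Fin r → ℕ) (hsum : ∀ n, ∑ i, nc n i = n)
    (p : Fin r → ℝ) (hp : ∀ i, 0 < p i)
    (hlim : ∀ i, Tendsto (fun n : ℕ => (nc n i : ℝ) / (n : ℝ)) atTop (nhds (p i))) :
    (fun n : ℕ =>
        (Real.log (Real.Gamma (∑ i, α i)) - Real.log (Real.Gamma ((n : ℝ) + ∑ i, α i))
            + ∑ i, (Real.log (Real.Gamma ((nc n i : ℝ) + α i)) - Real.log (Real.Gamma (α i))))
          - (∑ i, (nc n i : ℝ) * Real.log ((nc n i : ℝ) / (n : ℝ))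
              - ((r : ℝ) - 1) / 2 * Real.log (n : ℝ)))
      =O[atTop] (fun _ => (1 : ℝ)) := by
  have hne : (Finset.univ : Finset (Fin r)).Nonempty := by
    have : Nonempty (Fin r) := Fin.pos_iff_nonempty.mp (by omega)
    exact Finset.univ_nonempty
  have hᾱ : 0 < ∑ i, α i := Finset.sum_pos (fun i _ => hα i) hne
  -- each nc · i tends to atTop
  have htends : ∀ i, Tendsto (fun n : ℕ => nc n i) atTop atTop := by
    intro i
    have h1 : Tendsto (fun n : ℕ => ((nc n i : ℝ) / n) * n) atTop atTop :=
      Tendsto.pos_mul_atTop (hp i) (hlim i) tendsto_natCast_atTop_atTop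
    have h2 : Tendsto (fun n : ℕ => (nc n i : ℝ)) atTop atTop := by
      refine h1.congr' ?_
      filter_upwards [eventually_ge_atTop 1] with n hn
      have : (n:ℝ) ≠ 0 := by positivity
      field_simp
    exact tendsto_natCast_atTop_iff.mp h2
  -- the O(1) building blocks
  have hF : (fun n : ℕ => Real.log (Real.Gamma ((n:ℝ) + ∑ i, α i)) -
      ((n:ℝ) * Real.log n - n + ((∑ i, α i) - 1/2) * Real.log n)) =O[atTop]
      (fun _ => (1:ℝ)) := key_asymp hᾱ
  have hFi : ∀ i, (fun n : ℕ => Real.log (Real.Gamma ((nc n i:ℝ) + α i)) -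
      ((nc n i:ℝ) * Real.log (nc n i) - (nc n i:ℝ) + (α i - 1/2) * Real.log (nc n i)))
      =O[atTop] (fun _ => (1:ℝ)) := fun i =>
    (key_asymp (hα i)).comp_tendsto (htends i)
  have hlog : ∀ i, (fun n : ℕ => Real.log ((nc n i:ℝ) / n)) =O[atTop] (fun _ => (1:ℝ)) :=
    fun i => (((hlim i).log (hp i).ne')).isBigO_one ℝ
  -- the O(1) combination B
  have hB : (fun n : ℕ =>
      (Real.log (Real.Gamma (∑ i, α i)) - ∑ i, Real.log (Real.Gamma (α i)))
      - (Real.log (Real.Gamma ((n:ℝ) + ∑ i, α i)) -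
          ((n:ℝ) * Real.log n - n + ((∑ i, α i) - 1/2) * Real.log n))
      + ∑ i, ((Real.log (Real.Gamma ((nc n i:ℝ) + α i)) -
          ((nc n i:ℝ) * Real.log (nc n i) - (nc n i:ℝ) + (α i - 1/2) * Real.log (nc n i)))
          + (α i - 1/2) * Real.log ((nc n i:ℝ) / n))) =O[atTop] (fun _ => (1:ℝ)) := by
    have hc : (fun _ : ℕ => Real.log (Real.Gamma (∑ i, α i)) -
        ∑ i, Real.log (Real.Gamma (α i))) =O[atTop] (fun _ => (1:ℝ)) :=
      (tendsto_const_nhds.isBigO_one ℝ)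
    have hs : (fun n : ℕ => ∑ i, ((Real.log (Real.Gamma ((nc n i:ℝ) + α i)) -
          ((nc n i:ℝ) * Real.log (nc n i) - (nc n i:ℝ) + (α i - 1/2) * Real.log (nc n i)))
          + (α i - 1/2) * Real.log ((nc n i:ℝ) / n))) =O[atTop] (fun _ => (1:ℝ)) := by
      have := IsBigO.sum (fun i (_ : i ∈ (Finset.univ : Finset (Fin r))) =>
        ((hFi i).add ((hlog i).const_mul_left (α i - 1/2))))
      simpa using this
    simpa using (hc.sub hF).add hs
  -- eventual equality
  refine hB.congr' ?_ (EventuallyEq.refl _ _)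
  have hev : ∀ᶠ n : ℕ in atTop, 1 ≤ n ∧ ∀ i, 1 ≤ nc n i := by
    refine (eventually_ge_atTop 1).and ?_
    exact eventually_all.2 fun i => (htends i).eventually_ge_atTop 1
  filter_upwards [hev] with n ⟨hn, hni⟩
  have hn0 : (0:ℝ) < n := by exact_mod_cast hn
  have hni0 : ∀ i, (0:ℝ) < nc n i := fun i => by exact_mod_cast hni i
  have hlogdiv : ∀ i : Fin r, Real.log ((nc n i:ℝ) / n)
      = Real.log (nc n i) - Real.log n := fun i => Real.log_div (hni0 i).ne' hn0.ne'
  have hS : (∑ i, (nc n i:ℝ)) = (n:ℝ) := by rw [← Nat.cast_sum, hsum]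
  -- expand sums
  have e1 : ∑ i, (nc n i:ℝ) * (Real.log (nc n i) - Real.log n)
      = (∑ i, (nc n i:ℝ) * Real.log (nc n i)) - (n:ℝ) * Real.log n := by
    simp only [mul_sub]
    rw [Finset.sum_sub_distrib, ← Finset.sum_mul, hS]
  have e2 : ∑ i, (Real.log (Real.Gamma ((nc n i:ℝ) + α i)) - Real.log (Real.Gamma (α i)))
      = (∑ i, Real.log (Real.Gamma ((nc n i:ℝ) + α i))) - ∑ i, Real.log (Real.Gamma (α i)) :=
    Finset.sum_sub_distrib _ _
  have e3 : ∑ i, ((Real.log (Real.Gamma ((nc n i:ℝ) + α i)) -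
          ((nc n i:ℝ) * Real.log (nc n i) - (nc n i:ℝ) + (α i - 1/2) * Real.log (nc n i)))
          + (α i - 1/2) * (Real.log (nc n i) - Real.log n))
      = (∑ i, Real.log (Real.Gamma ((nc n i:ℝ) + α i)))
        - (∑ i, (nc n i:ℝ) * Real.log (nc n i)) + (n:ℝ)
        - ((∑ i, α i) - (r:ℝ)/2) * Real.log n := by
    have step : ∀ i : Fin r, (Real.log (Real.Gamma ((nc n i:ℝ) + α i)) -
          ((nc n i:ℝ) * Real.log (nc n i) - (nc n i:ℝ) + (α i - 1/2) * Real.log (nc n i)))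
          + (α i - 1/2) * (Real.log (nc n i) - Real.log n)
        = Real.log (Real.Gamma ((nc n i:ℝ) + α i)) - (nc n i:ℝ) * Real.log (nc n i)
          + (nc n i:ℝ) - α i * Real.log n + (1/2) * Real.log n := by
      intro i; ring
    rw [Finset.sum_congr rfl (fun i _ => step i)]
    rw [Finset.sum_add_distrib, Finset.sum_sub_distrib, Finset.sum_add_distrib,
      Finset.sum_sub_distrib, hS, ← Finset.sum_mul, Finset.sum_const, Finset.card_univ,
      Fintype.card_fin]
    ring
  simp only [hlogdiv]
  rw [e1, e2, e3]
  ring
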